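/- arXiv:1403.3320 — 3 statements merged into one kernel-verified Lean document; each statement's English description precedes it below -/
import Mathlib

section
/- For every real b > 0, the limit as a → 0⁺ of a·∫₀^∞ t^(−2)·exp(−a/t − b·t) dt equals 1. -/
open Real Filter MeasureTheory

lemma key_subst (b : ℝ) {a : ℝ} (ha : 0 < a) :
    a * ∫ t in Set.Ioi (0:ℝ), Real.exp (-a / t - b * t) / t ^ 2
      = ∫ s in Set.Ioi (0:ℝ), Real.exp (-s - a * b / s) := by
  have himg : (fun t : ℝ => a / t) '' Set.Ioi 0 = Set.Ioi 0 := by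
    ext s
    constructor
    · rintro ⟨t, ht, rfl⟩
      exact div_pos ha ht
    · intro hs
      exact ⟨a / s, div_pos ha hs, by field_simp⟩
  have hderiv : ∀ t ∈ Set.Ioi (0:ℝ), HasDerivWithinAt (fun t : ℝ => a / t)
      (-(a / t ^ 2)) (Set.Ioi 0) t := by
    intro t ht
    have : HasDerivAt (fun t : ℝ => a / t) (-(a / t ^ 2)) t := by
      simpa [div_eq_mul_inv, mul_comm, mul_assoc, neg_mul, mul_neg] using
        (hasDerivAt_inv (ne_of_gt ht)).const_mul a
    exact this.hasDerivWithinAt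
  have hinj : Set.InjOn (fun t : ℝ => a / t) (Set.Ioi 0) := by
    intro x hx y hy h
    dsimp only at h
    rw [div_eq_div_iff (ne_of_gt hx) (ne_of_gt hy)] at h
    exact (mul_left_cancel₀ ha.ne' h).symm
  have := MeasureTheory.integral_image_eq_integral_abs_deriv_smul measurableSet_Ioi
    hderiv hinj (fun s => Real.exp (-s - a * b / s))
  rw [himg] at this
  rw [this, ← MeasureTheory.integral_const_mul]
  refine setIntegral_congr_fun measurableSet_Ioi fun t ht => ?_
  have ht' : (0:ℝ) < t := ht
  have h2 : a * b / (a / t) = b * t := by field_simp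
  rw [abs_of_nonpos (neg_nonpos.2 (div_nonneg ha.le (sq_nonneg t)))]
  simp only [neg_neg, smul_eq_mul, h2, neg_div]
  field_simp

/-- `a * ∫₀^∞ t⁻² exp(-a/t - b t) dt → 1` as `a → 0⁺`. -/
theorem tendsto_mul_integral_inv_sq_exp (b : ℝ) (hb : 0 < b) :
    Tendsto (fun a : ℝ => a * ∫ t in Set.Ioi (0:ℝ), Real.exp (-a / t - b * t) / t ^ 2)
      (nhdsWithin 0 (Set.Ioi 0)) (nhds 1) := by
  have hcong : (fun a : ℝ => a * ∫ t in Set.Ioi (0:ℝ), Real.exp (-a / t - b * t) / t ^ 2)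
      =ᶠ[nhdsWithin 0 (Set.Ioi 0)] fun a => ∫ s in Set.Ioi (0:ℝ), Real.exp (-s - a * b / s) := by
    filter_upwards [self_mem_nhdsWithin] with a ha
    exact key_subst b ha
  rw [show (1:ℝ) = ∫ s in Set.Ioi (0:ℝ), Real.exp (-s) from integral_exp_neg_Ioi_zero.symm]
  refine Tendsto.congr' hcong.symm ?_
  refine tendsto_integral_filter_of_dominated_convergence (fun s => Real.exp (-s)) ?_ ?_
    ((exp_neg_integrableOn_Ioi 0 one_pos).congr_fun (by intro x _; simp) measurableSet_Ioi) ?_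
  · filter_upwards [self_mem_nhdsWithin] with a _
    apply Measurable.aestronglyMeasurable
    fun_prop
  · filter_upwards [self_mem_nhdsWithin] with a ha
    refine (ae_restrict_iff' measurableSet_Ioi).2 (Filter.Eventually.of_forall fun s hs => ?_)
    rw [Real.norm_eq_abs, abs_of_pos (Real.exp_pos _)]
    apply Real.exp_le_exp.2
    have : 0 ≤ a * b / s := div_nonneg (mul_nonneg (le_of_lt ha) hb.le) (le_of_lt hs)
    linarith
  · refine (ae_restrict_iff' measurableSet_Ioi).2 (Filter.Eventually.of_forall fun s hs => ?_)
    have : ContinuousAt (fun a : ℝ => Real.exp (-s - a * b / s)) 0 := by fun_prop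
    have h := this.tendsto.mono_left (nhdsWithin_le_nhds (s := Set.Ioi (0:ℝ)))
    simpa using h
end

section
/- For every λ > 0 and every θ ∈ [−π, π], the series Σ_{n ∈ ℤ} exp(−√λ·|θ + 2πn|) converges absolutely and its sum equals cosh(√λ·(π − |θ|)) / sinh(π·√λ). -/
open Real

/-- Periodization: `Σ_{n ∈ ℤ} exp(-√λ |θ + 2πn|) = cosh(√λ (π - |θ|)) / sinh(π √λ)`. -/
theorem periodized_exponential_sum (l : ℝ) (hl : 0 < l)
    (θ : ℝ) (hθ : θ ∈ Set.Icc (-Real.pi) Real.pi) :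
    HasSum (fun n : ℤ => Real.exp (-Real.sqrt l * |θ + 2 * Real.pi * n|))
      (Real.cosh (Real.sqrt l * (Real.pi - |θ|)) / Real.sinh (Real.pi * Real.sqrt l)) := by
  obtain ⟨hθ1, hθ2⟩ := hθ
  set s : ℝ := Real.sqrt l with hs
  have hspos : 0 < s := Real.sqrt_pos.mpr hl
  have hπ : 0 < Real.pi := Real.pi_pos
  set q : ℝ := Real.exp (-(2 * Real.pi * s)) with hq
  have hq0 : 0 ≤ q := (Real.exp_pos _).le
  have hq1 : q < 1 := by
    rw [hq, Real.exp_lt_one_iff]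
    nlinarith
  set f : ℤ → ℝ := fun n : ℤ => Real.exp (-s * |θ + 2 * Real.pi * n|) with hf
  -- positive part
  have hpos : HasSum (fun n : ℕ => f n)
      (Real.exp (-s * θ) * q * (1 - q)⁻¹ + Real.exp (-s * |θ|)) := by
    have h1 : HasSum (fun n : ℕ => f (n + 1))
        (Real.exp (-s * θ) * q * (1 - q)⁻¹) := by
      have hg := (hasSum_geometric_of_lt_one hq0 hq1).mul_left (Real.exp (-s * θ) * q)
      convert hg using 1
      · rfl
      funext n
      have hge : (0:ℝ) ≤ θ + 2 * Real.pi * ((n : ℝ) + 1) := by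
        have : (0:ℝ) ≤ (n : ℝ) := n.cast_nonneg
        nlinarith
      have hval : f ((n : ℤ) + 1) = Real.exp (-s * (θ + 2 * Real.pi * ((n:ℝ) + 1))) := by
        simp only [hf]
        push_cast
        rw [abs_of_nonneg hge]
      rw [hval, hq, ← Real.exp_nat_mul, ← Real.exp_add, ← Real.exp_add]
      congr 1
      ring
    have hfun : (fun n : ℕ => (fun m : ℕ => f m) (n + 1))
        = fun n : ℕ => f ((n : ℤ) + 1) := by
      funext n
      have hcast : ((n + 1 : ℕ) : ℤ) = (n : ℤ) + 1 := by push_cast; ring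
      simp only [hcast]
    have h2 := (hasSum_nat_add_iff (f := fun n : ℕ => f n) 1).mp (hfun ▸ h1)
    simpa [hf] using h2
  -- negative part
  have hneg : HasSum (fun n : ℕ => f (-(n + 1)))
      (Real.exp (s * θ) * q * (1 - q)⁻¹) := by
    have hg := (hasSum_geometric_of_lt_one hq0 hq1).mul_left (Real.exp (s * θ) * q)
    convert hg using 1
    · rfl
    funext n
    have hle : θ + 2 * Real.pi * (-((n : ℝ) + 1)) ≤ 0 := by
      have : (0:ℝ) ≤ (n : ℝ) := n.cast_nonneg
      nlinarith
    have hval : f (-((n : ℤ) + 1)) = Real.exp (s * (θ + 2 * Real.pi * (-((n:ℝ) + 1)))) := by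
      simp only [hf]
      push_cast
      rw [abs_of_nonpos hle]
      ring_nf
    rw [hval, hq, ← Real.exp_nat_mul, ← Real.exp_add, ← Real.exp_add]
    congr 1
    ring
  have htotal := hpos.of_nat_of_neg_add_one hneg
  convert htotal using 1
  -- algebraic identity
  have hexp : Real.exp (s * θ) + Real.exp (-(s * θ))
      = Real.exp (s * |θ|) + Real.exp (-(s * |θ|)) := by
    rcases abs_cases θ with ⟨h, _⟩ | ⟨h, _⟩
    · rw [h]
    · rw [h]; ring_nf
  have h1q : (1 : ℝ) - q ≠ 0 := by linarith
  have hsinh : Real.sinh (Real.pi * s) ≠ 0 := by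
    have := Real.sinh_pos_iff.mpr (by positivity : 0 < Real.pi * s)
    linarith
  rw [Real.cosh_eq, Real.sinh_eq]
  have hA : Real.exp (s * (Real.pi - |θ|)) = Real.exp (Real.pi * s) * Real.exp (-(s * |θ|)) := by
    rw [← Real.exp_add]; ring_nf
  have hB : Real.exp (-(s * (Real.pi - |θ|)))
      = Real.exp (-(Real.pi * s)) * Real.exp (s * |θ|) := by
    rw [← Real.exp_add]; ring_nf
  have hQ : q = Real.exp (-(Real.pi * s)) * Real.exp (-(Real.pi * s)) := by
    rw [hq, ← Real.exp_add]; ring_nf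
  have hE : Real.exp (-(Real.pi * s)) * Real.exp (Real.pi * s) = 1 := by
    rw [← Real.exp_add]; simp
  have hden : Real.exp (Real.pi * s) - Real.exp (-(Real.pi * s)) ≠ 0 := by
    have hlt : Real.exp (-(Real.pi * s)) < 1 := by
      rw [Real.exp_lt_one_iff]; nlinarith
    have hgt : (1:ℝ) < Real.exp (Real.pi * s) := by
      rw [Real.one_lt_exp_iff]; positivity
    linarith
  rw [hQ] at h1q
  rw [show -s * θ = -(s * θ) by ring, show -s * |θ| = -(s * |θ|) by ring, hA, hB, hQ]
  have h1q' : (1:ℝ) - Real.exp (-(Real.pi * s))^2 ≠ 0 := by rw [sq]; exact h1q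
  field_simp
  linear_combination ((Real.exp (-(Real.pi * s)))^2 * (Real.exp (Real.pi * s)
      - Real.exp (-(Real.pi * s)))) * hexp
    + ((Real.exp (s * |θ|) + Real.exp (-(s * |θ|))) * Real.exp (-(Real.pi * s))) * hE
    + (2*(Real.exp (-(Real.pi * s)))^3 - 2*Real.exp (Real.pi * s)*(Real.exp (-(Real.pi * s)))^2) * hexp
    - (2*Real.exp (-(Real.pi * s))*(Real.exp (s * |θ|) + Real.exp (-(s * |θ|)))) * hE
end

section
/- Let s > 0, a > 0, C ≥ 0, and let h : ℝ² → ℂ be a measurable function such that |h(ω)| ≤ C/‖ω‖² for all ω with ‖ω‖ ≥ a. Then for every x ∈ ℝ², the integral ∫_{ℝ² ∖ [−a,a]²} exp(−s‖ω‖²)·h(ω)·exp(i⟨ω, x⟩) dω satisfies |∫_{ℝ² ∖ [−a,a]²} exp(−s‖ω‖²)·h(ω)·exp(i⟨ω, x⟩) dω| ≤ π·C·∫_{s·a²}^∞ exp(−u)/u du. -/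
open MeasureTheory Real Set Filter

lemma expdiv_integrableOn (b : ℝ) (hb : 0 < b) :
    IntegrableOn (fun u => Real.exp (-u) / u) (Ici b) := by
  have hbase : IntegrableOn (fun u : ℝ => Real.exp (-u) * (1 / b)) (Ici b) := by
    rw [integrableOn_Ici_iff_integrableOn_Ioi]
    exact ((exp_neg_integrableOn_Ioi b one_pos).congr_fun
      (fun x _ => by norm_num) measurableSet_Ioi).mul_const _
  refine MeasureTheory.Integrable.mono hbase
    ((Real.measurable_exp.comp measurable_neg).div measurable_id).aestronglyMeasurable ?_
  rw [ae_restrict_iff' measurableSet_Ici]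
  filter_upwards with u hu
  have hu0 : 0 < u := lt_of_lt_of_le hb hu
  rw [Real.norm_eq_abs, Real.norm_eq_abs, abs_of_nonneg (by positivity),
    abs_of_nonneg (by positivity), div_eq_mul_one_div]
  gcongr
  exact hu

lemma sub_lemma (s a : ℝ) (hs : 0 < s) (ha : 0 < a) :
    (∫ r in Ioi a, ((fun u => Real.exp (-u) / u) ∘ (fun r : ℝ => s * r ^ 2)) r * (2 * s * r))
      = ∫ u in Ioi (s * a ^ 2), Real.exp (-u) / u := by
  have hb : 0 < s * a ^ 2 := by positivity
  have himg2 : (fun r : ℝ => s * r ^ 2) '' Ici a ⊆ Ici (s * a ^ 2) := by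
    rintro _ ⟨r, hr, rfl⟩
    have hr' : a ≤ r := hr
    have : 0 < r := lt_of_lt_of_le ha hr'
    simp only [mem_Ici]
    gcongr
  have himg1 : (fun r : ℝ => s * r ^ 2) '' Ioi a ⊆ Ioi (0:ℝ) := by
    rintro _ ⟨r, hr, rfl⟩
    have : 0 < r := lt_trans ha hr
    exact mem_Ioi.mpr (by positivity)
  have key := integral_comp_mul_deriv_Ioi (f := fun r : ℝ => s * r ^ 2)
      (f' := fun r => 2 * s * r) (g := fun u => Real.exp (-u) / u) (a := a)
      (by fun_prop)
      ((tendsto_pow_atTop two_ne_zero).const_mul_atTop hs)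
      (fun r hr => by
        have := ((hasDerivAt_pow 2 r).const_mul s).hasDerivWithinAt (s := Ioi r)
        exact this.congr_deriv (by norm_num; ring))
      (ContinuousOn.mono (s := Ioi (0:ℝ))
        (ContinuousOn.div (by fun_prop) continuousOn_id (fun u hu => ne_of_gt hu)) himg1)
      ((expdiv_integrableOn _ hb).mono_set himg2)
      ?_
  · exact key
  · have hbase : Integrable (fun r : ℝ => Real.exp (-s * r ^ 2) * (2 / a)) :=
      (integrable_exp_neg_mul_sq hs).mul_const _
    refine MeasureTheory.Integrable.mono hbase.integrableOn ?_ ?_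
    · apply Measurable.aestronglyMeasurable
      fun_prop
    · rw [ae_restrict_iff' measurableSet_Ici]
      filter_upwards with r hr
      have hr' : a ≤ r := hr
      have hr0 : 0 < r := lt_of_lt_of_le ha hr'
      have heq : ((fun u => Real.exp (-u) / u) ∘ (fun r : ℝ => s * r ^ 2)) r * (2 * s * r)
          = Real.exp (-(s * r ^ 2)) * (2 / r) := by
        simp only [Function.comp_apply]
        field_simp
      rw [heq, Real.norm_eq_abs, Real.norm_eq_abs, abs_of_nonneg (by positivity),
        abs_of_nonneg (by positivity), neg_mul]
      gcongr

/-- Truncation error estimate: the tail of the inverse Fourier integral of a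
Gaussian-regularized kernel decaying like `C/‖ω‖²` is bounded by
`π C ∫_{s a²}^∞ e^{-u}/u du`. -/
theorem gaussian_tail_truncation_bound
    (s a C : ℝ) (hs : 0 < s) (ha : 0 < a) (hC : 0 ≤ C)
    (h : EuclideanSpace ℝ (Fin 2) → ℂ) (hmeas : Measurable h)
    (hbound : ∀ ω : EuclideanSpace ℝ (Fin 2), a ≤ ‖ω‖ → ‖h ω‖ ≤ C / ‖ω‖ ^ 2)
    (x : EuclideanSpace ℝ (Fin 2)) :
    ‖(∫ ω : EuclideanSpace ℝ (Fin 2) in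
            (WithLp.ofLp ⁻¹' (Set.univ.pi fun _ : Fin 2 => Set.Icc (-a) a) :
              Set (EuclideanSpace ℝ (Fin 2)))ᶜ,
          (Real.exp (-s * ‖ω‖ ^ 2) : ℂ) * h ω *
            Complex.exp (Complex.I * ((inner ℝ ω x : ℝ) : ℂ)))‖
      ≤ Real.pi * C * ∫ u in Set.Ioi (s * a ^ 2), Real.exp (-u) / u := by
  set T : Set (EuclideanSpace ℝ (Fin 2)) := (WithLp.ofLp ⁻¹' (Set.univ.pi fun _ : Fin 2 => Set.Icc (-a) a))ᶜ with hT
  have hTmeas : MeasurableSet T := ((MeasurableSet.univ_pi fun _ => measurableSet_Icc).preimage (WithLp.measurable_ofLp _ _)).compl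
  -- the radial majorant
  set f : ℝ → ℝ := Set.indicator (Ici a) (fun r => C * Real.exp (-s * r ^ 2) / r ^ 2) with hf
  have hf_nonneg : ∀ r, 0 ≤ f r := by
    intro r
    apply Set.indicator_nonneg
    intro y hy
    have hy0 : 0 < y := lt_of_lt_of_le ha hy
    positivity
  have hf_meas : Measurable f := by
    apply Measurable.indicator ?_ measurableSet_Ici
    fun_prop
  -- on T the norm is at least a
  have hnormT : ∀ ω : EuclideanSpace ℝ (Fin 2), ω ∈ T → a ≤ ‖ω‖ := by
    intro ω hω
    rw [hT, Set.mem_compl_iff, Set.mem_preimage, Set.mem_pi] at hω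
    push_neg at hω
    obtain ⟨i, -, hi⟩ := hω
    rw [Set.mem_Icc] at hi
    have habs : a < |ω i| := by
      rcases not_and_or.mp hi with h1 | h2
      · rw [abs_of_neg (by linarith [lt_of_not_ge h1])]
        linarith [lt_of_not_ge h1]
      · rw [abs_of_pos (lt_trans ha (lt_of_not_ge h2))]
        exact lt_of_not_ge h2
    refine le_trans habs.le ?_
    rw [EuclideanSpace.norm_eq]
    rw [show |ω i| = Real.sqrt ((ω i) ^ 2) from (Real.sqrt_sq_eq_abs _).symm]
    apply Real.sqrt_le_sqrt
    have := Finset.single_le_sum (f := fun j => ‖ω j‖ ^ 2)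
      (fun j _ => by positivity) (Finset.mem_univ i)
    simpa [Real.norm_eq_abs, sq_abs] using this
  -- Gaussian integrability of the majorant composed with the norm
  have hgauss : Integrable (fun ω : EuclideanSpace ℝ (Fin 2) => Real.exp (-s * ‖ω‖ ^ 2)) := by
    have hI := (GaussianFourier.integrable_cexp_neg_mul_sq_norm_add (V := EuclideanSpace ℝ (Fin 2))
      (b := (s : ℂ)) (by simpa using hs) 0 0).norm
    apply hI.congr
    filter_upwards with v
    rw [Complex.norm_exp]
    congr 1
    push_cast
    simp [Complex.add_re, Complex.mul_re]
    left
    norm_cast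
  -- integrability of the radial majorant composed with the norm
  have hfint : Integrable (fun ω : EuclideanSpace ℝ (Fin 2) => f ‖ω‖) := by
    refine MeasureTheory.Integrable.mono (hgauss.const_mul (C / a ^ 2))
      (hf_meas.comp measurable_norm).aestronglyMeasurable ?_
    filter_upwards with ω
    rw [Real.norm_eq_abs, Real.norm_eq_abs, abs_of_nonneg (hf_nonneg _),
      abs_of_nonneg (by positivity)]
    by_cases hω : a ≤ ‖ω‖
    · rw [hf, Set.indicator_of_mem (Set.mem_Ici.mpr hω)]
      have h1 : 0 < ‖ω‖ := lt_of_lt_of_le ha hω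
      calc C * Real.exp (-s * ‖ω‖ ^ 2) / ‖ω‖ ^ 2
          ≤ C * Real.exp (-s * ‖ω‖ ^ 2) / a ^ 2 := by gcongr
        _ = C / a ^ 2 * Real.exp (-s * ‖ω‖ ^ 2) := by ring
    · rw [hf, Set.indicator_of_notMem (by simpa using hω)]
      positivity
  -- pointwise bound of the integrand on T
  have hnorm_int : ∀ ω ∈ T,
      ‖(Real.exp (-s * ‖ω‖ ^ 2) : ℂ) * h ω *
        Complex.exp (Complex.I * ((inner ℝ ω x : ℝ) : ℂ))‖ ≤ f ‖ω‖ := by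
    intro ω hω
    have hωa := hnormT ω hω
    have hω0 : 0 < ‖ω‖ := lt_of_lt_of_le ha hωa
    rw [norm_mul, norm_mul]
    have h3 : ‖Complex.exp (Complex.I * ((inner ℝ ω x : ℝ) : ℂ))‖ = 1 := by
      rw [Complex.norm_exp]
      simp [Complex.mul_re]
    have h1 : ‖((Real.exp (-s * ‖ω‖ ^ 2) : ℝ) : ℂ)‖ = Real.exp (-s * ‖ω‖ ^ 2) := by
      rw [Complex.norm_real, Real.norm_eq_abs, abs_of_nonneg (Real.exp_nonneg _)]
    rw [h1, h3, mul_one, hf, Set.indicator_of_mem (Set.mem_Ici.mpr hωa)]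
    have hb := hbound ω hωa
    calc Real.exp (-s * ‖ω‖ ^ 2) * ‖h ω‖
        ≤ Real.exp (-s * ‖ω‖ ^ 2) * (C / ‖ω‖ ^ 2) := by gcongr
      _ = C * Real.exp (-s * ‖ω‖ ^ 2) / ‖ω‖ ^ 2 := by ring
  have step1 : ‖
      (∫ ω in T, (Real.exp (-s * ‖ω‖ ^ 2) : ℂ) * h ω *
        Complex.exp (Complex.I * ((inner ℝ ω x : ℝ) : ℂ)))‖
      ≤ ∫ ω in T, f ‖ω‖ := by
    refine le_trans (norm_integral_le_integral_norm _) ?_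
    refine integral_mono_of_nonneg (Filter.Eventually.of_forall fun ω => norm_nonneg _)
      hfint.integrableOn ?_
    exact (ae_restrict_iff' hTmeas).mpr (Filter.Eventually.of_forall hnorm_int)
  have step2 : (∫ ω in T, f ‖ω‖) ≤ ∫ ω : EuclideanSpace ℝ (Fin 2), f ‖ω‖ :=
    setIntegral_le_integral hfint (Filter.Eventually.of_forall fun ω => hf_nonneg _)
  -- radial computation
  have hball : (volume (Metric.ball (0 : EuclideanSpace ℝ (Fin 2)) 1)).toReal = π := by
    rw [EuclideanSpace.volume_ball]
    norm_num
    rw [Real.sq_sqrt Real.pi_nonneg]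
  have hint_eq : (∫ y in Ioi (0:ℝ), y ^ (2-1) • f y)
      = (C/2) * ∫ u in Ioi (s*a^2), Real.exp (-u)/u := by
    have e1 : ∀ y ∈ Ioi (0:ℝ), y ^ (2-1) • f y = Set.indicator (Ici a)
        (fun y => (C/2) * (((fun u => Real.exp (-u)/u) ∘ (fun r : ℝ => s*r^2)) y
          * (2*s*y))) y := by
      intro y hy
      by_cases hmem : y ∈ Ici a
      · have hy0 : 0 < y := lt_of_lt_of_le ha hmem
        rw [hf, Set.indicator_of_mem hmem, Set.indicator_of_mem hmem]
        simp only [Function.comp_apply, pow_one, smul_eq_mul]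
        field_simp
        ring
      · rw [hf, Set.indicator_of_notMem hmem, Set.indicator_of_notMem hmem, smul_zero]
    rw [setIntegral_congr_fun measurableSet_Ioi e1, setIntegral_indicator measurableSet_Ici,
      show Ioi (0:ℝ) ∩ Ici a = Ici a from
        inter_eq_self_of_subset_right (fun y hy => lt_of_lt_of_le ha hy),
      integral_Ici_eq_integral_Ioi, integral_const_mul, sub_lemma s a hs ha]
  have hrad : (∫ ω : EuclideanSpace ℝ (Fin 2), f ‖ω‖)
      = Real.pi * C * ∫ u in Ioi (s * a ^ 2), Real.exp (-u) / u := by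
    rw [integral_fun_norm_addHaar (volume : Measure (EuclideanSpace ℝ (Fin 2))) f]
    rw [show Module.finrank ℝ (EuclideanSpace ℝ (Fin 2)) = 2 from finrank_euclideanSpace_fin]
    rw [hint_eq, measureReal_def, hball]
    simp only [nsmul_eq_mul, smul_eq_mul, Nat.cast_ofNat]
    ring
  exact le_of_le_of_eq (le_trans step1 step2) hrad
end
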